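/- Let A and B be positive definite d×d complex matrices. Consider the real-linear map T defined on pairs (X₁, X₂) of anti-Hermitian d×d matrices by T(X₁, X₂) = [A^{-1/2}, X₁]BA^{-1/2} + A^{-1/2}B[A^{-1/2}, X₁] + A^{-1/2}[B, X₂]A^{-1/2}, where [X, Y] = XY − YX. Then T is surjective onto the real subspace { Y Hermitian : tr(A^{1/2}B^{-1}A^{1/2} Y) = 0 } if and only if the joint commutant {A, B}' = { C ∈ M_d(ℂ) : AC = CA and BC = CB } consists only of scalar multiples of the identity. -/

import Mathlib

open Matrix
open scoped ComplexOrder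

noncomputable def Matrix.PosSemidef.sqrt {n : Type*} [Fintype n] [DecidableEq n] {𝕜 : Type*}
    [RCLike 𝕜] {A : Matrix n n 𝕜} (hA : A.PosSemidef) : Matrix n n 𝕜 :=
  hA.1.eigenvectorUnitary.1 * diagonal ((↑) ∘ Real.sqrt ∘ hA.1.eigenvalues) *
  (star hA.1.eigenvectorUnitary : Matrix n n 𝕜)

lemma DiffSurjAux.sqrt_isHermitian {d : ℕ} {A : Matrix (Fin d) (Fin d) ℂ} (hA : A.PosSemidef) :
    hA.sqrtᴴ = hA.sqrt := by
  unfold Matrix.PosSemidef.sqrt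
  simp only [Matrix.conjTranspose_mul, Matrix.diagonal_conjTranspose, Matrix.mul_assoc]
  congr 2
  · ext i; simp
  · simp [Matrix.star_eq_conjTranspose]

lemma DiffSurjAux.sqrt_mul_self {d : ℕ} {A : Matrix (Fin d) (Fin d) ℂ} (hA : A.PosSemidef) :
    hA.sqrt * hA.sqrt = A := by
  unfold Matrix.PosSemidef.sqrt
  conv_rhs => rw [hA.1.spectral_theorem, Unitary.conjStarAlgAut_apply]
  have hU : (star hA.1.eigenvectorUnitary : Matrix (Fin d) (Fin d) ℂ) * hA.1.eigenvectorUnitary.1 = 1 :=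
    Unitary.coe_star_mul_self _
  have hD : diagonal (((↑) ∘ Real.sqrt ∘ hA.1.eigenvalues) : Fin d → ℂ) *
      diagonal ((↑) ∘ Real.sqrt ∘ hA.1.eigenvalues) = diagonal (RCLike.ofReal ∘ hA.1.eigenvalues) := by
    rw [Matrix.diagonal_mul_diagonal]
    congr 1; ext i
    simp only [Function.comp_apply]
    rw [← Complex.ofReal_mul, Real.mul_self_sqrt (hA.eigenvalues_nonneg i)]
    rfl
  calc _ = (hA.1.eigenvectorUnitary.1 * diagonal (((↑) ∘ Real.sqrt ∘ hA.1.eigenvalues) : Fin d → ℂ)) *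
      ((star hA.1.eigenvectorUnitary : Matrix (Fin d) (Fin d) ℂ) * hA.1.eigenvectorUnitary.1) *
      (diagonal ((↑) ∘ Real.sqrt ∘ hA.1.eigenvalues) * (star hA.1.eigenvectorUnitary : Matrix (Fin d) (Fin d) ℂ)) := by
        simp only [Matrix.mul_assoc]; rfl
    _ = _ := by rw [hU, Matrix.mul_one, Matrix.mul_assoc, ← Matrix.mul_assoc _ _ (star _ : Matrix _ _ ℂ), hD]; simp [Matrix.mul_assoc]

namespace DiffSurjAux

variable {d : ℕ}

lemma trace_form (X : Matrix (Fin d) (Fin d) ℂ) :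
    Matrix.trace (Xᴴ * X) = ((∑ i, ∑ j, Complex.normSq (X j i) : ℝ) : ℂ) := by
  simp only [Matrix.trace, Matrix.diag, Matrix.mul_apply, Matrix.conjTranspose_apply]
  push_cast
  congr 1; ext i; congr 1; ext j
  rw [Complex.normSq_eq_conj_mul_self]; rfl

lemma eq_zero_of_trace_conj_mul_self {X : Matrix (Fin d) (Fin d) ℂ}
    (h : Matrix.trace (Xᴴ * X) = 0) : X = 0 := by
  rw [trace_form] at h
  have h2 : (∑ i, ∑ j, Complex.normSq (X j i) : ℝ) = 0 := by exact_mod_cast h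
  have h3 : ∀ i ∈ Finset.univ, ∀ j ∈ Finset.univ, Complex.normSq (X j i) = 0 := by
    intro i _ j _
    have := (Finset.sum_eq_zero_iff_of_nonneg (fun i _ =>
      Finset.sum_nonneg fun j _ => Complex.normSq_nonneg _)).mp h2 i (Finset.mem_univ i)
    exact (Finset.sum_eq_zero_iff_of_nonneg fun j _ => Complex.normSq_nonneg _).mp this j
      (Finset.mem_univ j)
  ext j i
  simpa using Complex.normSq_eq_zero.mp (h3 i (Finset.mem_univ i) j (Finset.mem_univ j))

lemma skew_elim {K : Matrix (Fin d) (Fin d) ℂ} (hK : Kᴴ = -K)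
    (h : ∀ X : Matrix (Fin d) (Fin d) ℂ, Xᴴ = -X → Matrix.trace (K * X) = 0) : K = 0 := by
  have h0 := h K hK
  have : Matrix.trace (Kᴴ * K) = 0 := by
    rw [hK, Matrix.neg_mul, Matrix.trace_neg, h0, neg_zero]
  exact eq_zero_of_trace_conj_mul_self this

lemma herm_trace_real {Z Y : Matrix (Fin d) (Fin d) ℂ} (hZ : Zᴴ = Z) (hY : Yᴴ = Y) :
    (starRingEnd ℂ) (Matrix.trace (Z * Y)) = Matrix.trace (Z * Y) := by
  have h : (Z * Y)ᴴ = Y * Z := by rw [Matrix.conjTranspose_mul, hZ, hY]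
  calc (starRingEnd ℂ) (Matrix.trace (Z * Y)) = Matrix.trace ((Z * Y)ᴴ) :=
        (Matrix.trace_conjTranspose _).symm
    _ = Matrix.trace (Y * Z) := by rw [h]
    _ = Matrix.trace (Z * Y) := Matrix.trace_mul_comm _ _

/-- The real subspace of Hermitian matrices. -/
noncomputable def hermSub (d : ℕ) : Submodule ℝ (Matrix (Fin d) (Fin d) ℂ) where
  carrier := {Y | Yᴴ = Y}
  add_mem' := by
    intro a b ha hb
    simp only [Set.mem_setOf_eq] at *
    rw [Matrix.conjTranspose_add, ha, hb]
  zero_mem' := by simp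
  smul_mem' := by
    intro r Y hY
    simp only [Set.mem_setOf_eq] at *
    rw [Matrix.conjTranspose_smul, star_trivial, hY]

noncomputable def pair (d : ℕ) : ↥(hermSub d) →ₗ[ℝ] Module.Dual ℝ ↥(hermSub d) where
  toFun Z :=
    { toFun := fun Y => (Matrix.trace ((Z : Matrix (Fin d) (Fin d) ℂ) * (Y : Matrix (Fin d) (Fin d) ℂ))).re
      map_add' := by intro a b; simp [Matrix.mul_add]
      map_smul' := by intro r a; simp [Matrix.mul_smul] }
  map_add' := by intro a b; ext Y; simp [Matrix.add_mul]
  map_smul' := by intro r a; ext Y; simp [Matrix.smul_mul]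

lemma duality {R' V' : Submodule ℝ ↥(hermSub d)}
    (h : ∀ Z : ↥(hermSub d),
      (∀ y ∈ R', Matrix.trace ((Z : Matrix (Fin d) (Fin d) ℂ) * (y : Matrix (Fin d) (Fin d) ℂ)) = 0) →
      ∀ y ∈ V', Matrix.trace ((Z : Matrix (Fin d) (Fin d) ℂ) * (y : Matrix (Fin d) (Fin d) ℂ)) = 0) :
    V' ≤ R' := by
  haveI : FiniteDimensional ℝ (Matrix (Fin d) (Fin d) ℂ) := Module.Finite.matrix
  haveI : FiniteDimensional ℝ ↥(hermSub d) := inferInstance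
  have hreal : ∀ Z y : ↥(hermSub d),
      Matrix.trace ((Z : Matrix (Fin d) (Fin d) ℂ) * (y : Matrix (Fin d) (Fin d) ℂ))
        = ((Matrix.trace ((Z : Matrix (Fin d) (Fin d) ℂ) * (y : Matrix (Fin d) (Fin d) ℂ))).re : ℂ) := by
    intro Z y
    exact (Complex.conj_eq_iff_re.mp (herm_trace_real Z.2 y.2)).symm
  have hinj : Function.Injective (pair d) := by
    rw [injective_iff_map_eq_zero]
    intro Z hZ
    have h0 : (Matrix.trace ((Z : Matrix (Fin d) (Fin d) ℂ) * (Z : Matrix (Fin d) (Fin d) ℂ))).re = 0 := by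
      have := congrFun (congrArg DFunLike.coe hZ) Z
      simpa [pair] using this
    have h1 : Matrix.trace ((Z : Matrix (Fin d) (Fin d) ℂ)ᴴ * (Z : Matrix (Fin d) (Fin d) ℂ)) = 0 := by
      rw [Z.2]
      rw [hreal Z Z, h0]; simp
    have := eq_zero_of_trace_conj_mul_self h1
    exact Subtype.ext this
  have hsurj : Function.Surjective (pair d) := by
    have hfr : Module.finrank ℝ ↥(hermSub d) = Module.finrank ℝ (Module.Dual ℝ ↥(hermSub d)) :=
      Subspace.dual_finrank_eq.symm
    exact (LinearMap.injective_iff_surjective_of_finrank_eq_finrank hfr).mp hinj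
  rw [← Subspace.dualAnnihilator_le_dualAnnihilator_iff]
  intro φ hφ
  obtain ⟨Z, rfl⟩ := hsurj φ
  rw [Submodule.mem_dualAnnihilator] at hφ ⊢
  intro y hy
  have hker : ∀ y ∈ R',
      Matrix.trace ((Z : Matrix (Fin d) (Fin d) ℂ) * (y : Matrix (Fin d) (Fin d) ℂ)) = 0 := by
    intro w hw
    have hw0 : (Matrix.trace ((Z : Matrix (Fin d) (Fin d) ℂ) * (w : Matrix (Fin d) (Fin d) ℂ))).re = 0 := hφ w hw
    rw [hreal Z w, hw0]; simp
  have := h Z hker y hy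
  show (Matrix.trace ((Z : Matrix (Fin d) (Fin d) ℂ) * (y : Matrix (Fin d) (Fin d) ℂ))).re = 0
  rw [this]; simp

lemma trace_T_eq (S B Z X₁ X₂ : Matrix (Fin d) (Fin d) ℂ) :
    Matrix.trace (Z * ((S*X₁ - X₁*S)*B*S + S*B*(S*X₁ - X₁*S) + S*(B*X₂ - X₂*B)*S))
    = Matrix.trace (((B*S*Z + Z*S*B)*S - S*(B*S*Z + Z*S*B)) * X₁)
      + Matrix.trace ((S*Z*S*B - B*S*Z*S) * X₂) := by
  have r1 : Matrix.trace (Z * (S*X₁*B*S)) = Matrix.trace (B*S*Z*S*X₁) := by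
    rw [show Z * (S*X₁*B*S) = (Z*S*X₁)*(B*S) by simp only [Matrix.mul_assoc],
      Matrix.trace_mul_comm,
      show (B*S)*(Z*S*X₁) = B*S*Z*S*X₁ by simp only [Matrix.mul_assoc]]
  have r2 : Matrix.trace (Z * (X₁*S*B*S)) = Matrix.trace (S*B*S*Z*X₁) := by
    rw [show Z * (X₁*S*B*S) = (Z*X₁)*(S*B*S) by simp only [Matrix.mul_assoc],
      Matrix.trace_mul_comm,
      show (S*B*S)*(Z*X₁) = S*B*S*Z*X₁ by simp only [Matrix.mul_assoc]]
  have r3 : Matrix.trace (Z * (S*B*S*X₁)) = Matrix.trace (Z*S*B*S*X₁) := by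
    rw [show Z * (S*B*S*X₁) = Z*S*B*S*X₁ by simp only [Matrix.mul_assoc]]
  have r4 : Matrix.trace (Z * (S*B*X₁*S)) = Matrix.trace (S*Z*S*B*X₁) := by
    rw [show Z * (S*B*X₁*S) = (Z*S*B*X₁)*S by simp only [Matrix.mul_assoc],
      Matrix.trace_mul_comm,
      show S*(Z*S*B*X₁) = S*Z*S*B*X₁ by simp only [Matrix.mul_assoc]]
  have r5 : Matrix.trace (Z * (S*B*X₂*S)) = Matrix.trace (S*Z*S*B*X₂) := by
    rw [show Z * (S*B*X₂*S) = (Z*S*B*X₂)*S by simp only [Matrix.mul_assoc],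
      Matrix.trace_mul_comm,
      show S*(Z*S*B*X₂) = S*Z*S*B*X₂ by simp only [Matrix.mul_assoc]]
  have r6 : Matrix.trace (Z * (S*X₂*B*S)) = Matrix.trace (B*S*Z*S*X₂) := by
    rw [show Z * (S*X₂*B*S) = (Z*S*X₂)*(B*S) by simp only [Matrix.mul_assoc],
      Matrix.trace_mul_comm,
      show (B*S)*(Z*S*X₂) = B*S*Z*S*X₂ by simp only [Matrix.mul_assoc]]
  have lhs : Z * ((S*X₁ - X₁*S)*B*S + S*B*(S*X₁ - X₁*S) + S*(B*X₂ - X₂*B)*S)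
      = Z * (S*X₁*B*S) - Z * (X₁*S*B*S) + (Z * (S*B*S*X₁) - Z * (S*B*X₁*S))
        + (Z * (S*B*X₂*S) - Z * (S*X₂*B*S)) := by
    noncomm_ring
  have rhsX1 : ((B*S*Z + Z*S*B)*S - S*(B*S*Z + Z*S*B)) * X₁
      = B*S*Z*S*X₁ + Z*S*B*S*X₁ - S*B*S*Z*X₁ - S*Z*S*B*X₁ := by noncomm_ring
  have rhsX2 : (S*Z*S*B - B*S*Z*S) * X₂ = S*Z*S*B*X₂ - B*S*Z*S*X₂ := by noncomm_ring
  rw [lhs, rhsX1, rhsX2]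
  simp only [Matrix.trace_add, Matrix.trace_sub, r1, r2, r3, r4, r5, r6]
  ring

lemma real_smul_mat (r : ℝ) (M : Matrix (Fin d) (Fin d) ℂ) : r • M = (r : ℂ) • M := by
  ext i j; simp [Complex.real_smul]

end DiffSurjAux

open DiffSurjAux

/-- The differential of the map `Γ` is surjective onto the tangent space
`{Y Hermitian : tr(A^{1/2} B⁻¹ A^{1/2} Y) = 0}` iff the joint commutant of `A` and `B`
is trivial.  Here `T (X₁, X₂) = [A^{-1/2}, X₁] B A^{-1/2} + A^{-1/2} B [A^{-1/2}, X₁]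
+ A^{-1/2} [B, X₂] A^{-1/2}` on pairs of anti-Hermitian matrices. -/
theorem differential_surjective_iff_trivial_commutant
    (d : ℕ) (A B : Matrix (Fin d) (Fin d) ℂ) (hA : A.PosDef) (hB : B.PosDef) :
    (∀ Y : Matrix (Fin d) (Fin d) ℂ, Y.IsHermitian →
        (hA.posSemidef.sqrt * B⁻¹ * hA.posSemidef.sqrt * Y).trace = 0 →
        ∃ X₁ X₂ : Matrix (Fin d) (Fin d) ℂ, X₁ᴴ = -X₁ ∧ X₂ᴴ = -X₂ ∧
          (hA.posSemidef.sqrt⁻¹ * X₁ - X₁ * hA.posSemidef.sqrt⁻¹) * B * hA.posSemidef.sqrt⁻¹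
            + hA.posSemidef.sqrt⁻¹ * B *
                (hA.posSemidef.sqrt⁻¹ * X₁ - X₁ * hA.posSemidef.sqrt⁻¹)
            + hA.posSemidef.sqrt⁻¹ * (B * X₂ - X₂ * B) * hA.posSemidef.sqrt⁻¹ = Y) ↔
    (∀ C : Matrix (Fin d) (Fin d) ℂ, A * C = C * A → B * C = C * B →
        ∃ c : ℂ, C = c • (1 : Matrix (Fin d) (Fin d) ℂ)) := by
  classical
  set Rm := hA.posSemidef.sqrt with hRmdef
  set S := Rm⁻¹ with hSdef
  -- basic facts
  have hRherm : Rmᴴ = Rm := DiffSurjAux.sqrt_isHermitian hA.posSemidef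
  have hRR : Rm * Rm = A := DiffSurjAux.sqrt_mul_self hA.posSemidef
  have hAdet : IsUnit A.det := hA.det_pos.ne'.isUnit
  have hRdet : IsUnit Rm.det := by
    have h1 : Rm.det * Rm.det = A.det := by rw [← Matrix.det_mul, hRR]
    exact isUnit_of_mul_isUnit_left (h1 ▸ hAdet)
  have hRS : Rm * S = 1 := Matrix.mul_nonsing_inv _ hRdet
  have hSR : S * Rm = 1 := Matrix.nonsing_inv_mul _ hRdet
  have hSherm : Sᴴ = S := by rw [hSdef, Matrix.conjTranspose_nonsing_inv, hRherm]
  have hBherm : Bᴴ = B := hB.isHermitian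
  have hBdet : IsUnit B.det := hB.det_pos.ne'.isUnit
  have hBBi : B * B⁻¹ = 1 := Matrix.mul_nonsing_inv _ hBdet
  have hBiB : B⁻¹ * B = 1 := Matrix.nonsing_inv_mul _ hBdet
  have hBiherm : B⁻¹ᴴ = B⁻¹ := by rw [Matrix.conjTranspose_nonsing_inv, hBherm]
  set W := Rm * B⁻¹ * Rm with hWdef
  have hWherm : Wᴴ = W := by
    rw [hWdef, Matrix.conjTranspose_mul, Matrix.conjTranspose_mul, hRherm, hBiherm]
    noncomm_ring
  constructor
  · -- surjectivity → trivial commutant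
    intro hsurj
    have hSWS : S*W*S = B⁻¹ := by
      rw [hWdef, show S*(Rm*B⁻¹*Rm)*S = (S*Rm)*B⁻¹*(Rm*S) by noncomm_ring, hSR, hRS,
        Matrix.one_mul, Matrix.mul_one]
    have key : ∀ P : Matrix (Fin d) (Fin d) ℂ, Pᴴ = P → A*P = P*A → B*P = P*B →
        ∃ t : ℂ, P = t • (1 : Matrix (Fin d) (Fin d) ℂ) := by
      rcases Nat.eq_zero_or_pos d with hd0 | hd0
      · intro P _ _ _
        refine ⟨0, ?_⟩
        ext i j
        exact absurd i.isLt (by omega)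
      intro P hPherm hPA hPB
      have hBiP : B⁻¹ * P = P * B⁻¹ := by
        calc B⁻¹*P = B⁻¹*P*(B*B⁻¹) := by rw [hBBi, Matrix.mul_one]
          _ = B⁻¹*(B*P)*B⁻¹ := by rw [show B⁻¹*P*(B*B⁻¹) = B⁻¹*(P*B)*B⁻¹ by noncomm_ring, ← hPB]
          _ = P*B⁻¹ := by rw [show B⁻¹*(B*P)*B⁻¹ = (B⁻¹*B)*(P*B⁻¹) by noncomm_ring, hBiB,
                Matrix.one_mul]
      set Zc : Matrix (Fin d) (Fin d) ℂ := Rm*(B⁻¹*P)*Rm with hZcdef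
      have hZherm : Zcᴴ = Zc := by
        have h1 : (Rm*(B⁻¹*P)*Rm)ᴴ = Rm*(P*B⁻¹)*Rm := by
          simp only [Matrix.conjTranspose_mul, hRherm, hBiherm, hPherm]
          noncomm_ring
        rw [hZcdef, h1, ← hBiP]
      have hWinv : W * (S*B*S) = 1 := by
        rw [hWdef, show Rm*B⁻¹*Rm*(S*B*S) = Rm*(B⁻¹*((Rm*S)*B))*S by noncomm_ring, hRS,
          Matrix.one_mul, show Rm*(B⁻¹*B)*S = Rm*(B⁻¹*B)*S from rfl, hBiB, Matrix.mul_one, hRS]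
      have hone : (1 : Matrix (Fin d) (Fin d) ℂ) ≠ 0 := by
        intro h
        have := congrFun (congrFun h ⟨0, hd0⟩) ⟨0, hd0⟩
        simp [Matrix.one_apply] at this
      have hWne : W ≠ 0 := by
        intro h
        apply hone
        rw [← hWinv, h, Matrix.zero_mul]
      have hWWtr : Matrix.trace (W*W) ≠ 0 := by
        intro h0
        apply hWne
        apply eq_zero_of_trace_conj_mul_self
        rw [hWherm]
        exact h0
      set t := Matrix.trace (W*Zc) / Matrix.trace (W*W) with htdef
      have hWZreal := herm_trace_real hWherm hZherm
      have hWWreal := herm_trace_real hWherm hWherm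
      have htreal : (starRingEnd ℂ) t = t := by rw [htdef, map_div₀, hWZreal, hWWreal]
      set Yv : Matrix (Fin d) (Fin d) ℂ := Zc - t • W with hYvdef
      have hYvherm : Yvᴴ = Yv := by
        rw [hYvdef, Matrix.conjTranspose_sub, Matrix.conjTranspose_smul, hZherm, hWherm]
        rw [show star t = t from htreal]
      have hYvtr : Matrix.trace (W * Yv) = 0 := by
        rw [hYvdef, Matrix.mul_sub, Matrix.trace_sub, Matrix.mul_smul, Matrix.trace_smul,
          smul_eq_mul, htdef, div_mul_cancel₀ _ hWWtr, sub_self]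
      obtain ⟨X₁, X₂, s1, s2, hTX⟩ := hsurj Yv hYvherm hYvtr
      have hMz : S*Zc*S = B⁻¹*P := by
        rw [hZcdef, show S*(Rm*(B⁻¹*P)*Rm)*S = (S*Rm)*(B⁻¹*P)*(Rm*S) by noncomm_ring,
          hSR, hRS, Matrix.one_mul, Matrix.mul_one]
      have hK2z' : S*Zc*S*B - B*S*Zc*S = 0 := by
        have e1 : S*Zc*S*B = P := by
          rw [show S*Zc*S*B = (S*Zc*S)*B from rfl, hMz,
            show (B⁻¹*P)*B = B⁻¹*(P*B) by noncomm_ring, ← hPB,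
            show B⁻¹*(B*P) = (B⁻¹*B)*P by noncomm_ring, hBiB, Matrix.one_mul]
        have e2 : B*S*Zc*S = P := by
          rw [show B*S*Zc*S = B*(S*Zc*S) by noncomm_ring, hMz,
            show B*(B⁻¹*P) = (B*B⁻¹)*P by noncomm_ring, hBBi, Matrix.one_mul]
        rw [e1, e2, sub_self]
      have hK1z' : (B*S*Zc + Zc*S*B)*S - S*(B*S*Zc + Zc*S*B) = 0 := by
        have e1 : B*S*Zc = P*Rm := by
          rw [hZcdef, show B*S*(Rm*(B⁻¹*P)*Rm) = B*((S*Rm)*(B⁻¹*P))*Rm by noncomm_ring, hSR,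
            Matrix.one_mul, show B*(B⁻¹*P)*Rm = ((B*B⁻¹)*P)*Rm by noncomm_ring, hBBi,
            Matrix.one_mul]
        have e2 : Zc*S*B = Rm*P := by
          rw [hZcdef, show Rm*(B⁻¹*P)*Rm*S*B = Rm*((B⁻¹*P)*((Rm*S)*B)) by noncomm_ring, hRS,
            Matrix.one_mul, show Rm*((B⁻¹*P)*B) = Rm*(B⁻¹*(P*B)) by noncomm_ring, ← hPB,
            show Rm*(B⁻¹*(B*P)) = Rm*((B⁻¹*B)*P) by noncomm_ring, hBiB, Matrix.one_mul]
        have c1 : S*(A*P)*S = Rm*P*S := by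
          rw [← hRR, show S*(Rm*Rm*P)*S = ((S*Rm)*(Rm*P))*S by noncomm_ring, hSR,
            Matrix.one_mul]
        have c2 : S*(P*A)*S = S*P*Rm := by
          rw [← hRR, show S*(P*(Rm*Rm))*S = (S*P*Rm)*(Rm*S) by noncomm_ring, hRS,
            Matrix.mul_one]
        have e3 : Rm*P*S = S*P*Rm := by rw [← c1, ← c2, hPA]
        rw [e1, e2,
          show (P*Rm + Rm*P)*S - S*(P*Rm + Rm*P)
            = P*(Rm*S) + Rm*P*S - (S*P*Rm + (S*Rm)*P) by noncomm_ring,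
          hRS, hSR, e3, Matrix.mul_one, Matrix.one_mul]
        abel
      have hZcT := trace_T_eq S B Zc X₁ X₂
      rw [hK1z', hK2z', hTX, Matrix.zero_mul, Matrix.zero_mul, Matrix.trace_zero,
        add_zero] at hZcT
      have h5 : Yv*Yv = Zc*Yv - t•(W*Yv) := by
        nth_rewrite 1 [hYvdef]
        rw [Matrix.sub_mul, Matrix.smul_mul]
      have hYvYv : Matrix.trace (Yv * Yv) = 0 := by
        rw [h5, Matrix.trace_sub, Matrix.trace_smul, hZcT, hYvtr, smul_zero, sub_zero]
      have hYv0 : Yv = 0 := eq_zero_of_trace_conj_mul_self (by rw [hYvherm]; exact hYvYv)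
      have hZcW : Zc = t • W := by rwa [hYvdef, sub_eq_zero] at hYv0
      have hBP' : B⁻¹*P = t • B⁻¹ := by
        calc B⁻¹*P = S*Zc*S := hMz.symm
          _ = S*(t•W)*S := by rw [show S*Zc*S = S*Zc*S from rfl, hZcW]
          _ = t • (S*W*S) := by rw [Matrix.mul_smul, Matrix.smul_mul]
          _ = t • B⁻¹ := by rw [hSWS]
      refine ⟨t, ?_⟩
      calc P = B*(B⁻¹*P) := by
            rw [show B*(B⁻¹*P) = (B*B⁻¹)*P by noncomm_ring, hBBi, Matrix.one_mul]
        _ = B*(t•B⁻¹) := by rw [hBP']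
        _ = t•(B*B⁻¹) := by rw [Matrix.mul_smul]
        _ = t•1 := by rw [hBBi]
    intro C hAC hBC
    have hACt : A*Cᴴ = Cᴴ*A := by
      have h := congrArg Matrix.conjTranspose hAC
      rw [Matrix.conjTranspose_mul, Matrix.conjTranspose_mul,
        show Aᴴ = A from hA.isHermitian] at h
      exact h.symm
    have hBCt : B*Cᴴ = Cᴴ*B := by
      have h := congrArg Matrix.conjTranspose hBC
      rw [Matrix.conjTranspose_mul, Matrix.conjTranspose_mul, hBherm] at h
      exact h.symm
    set Hm : Matrix (Fin d) (Fin d) ℂ := (2⁻¹:ℂ) • (C + Cᴴ) with hHmdef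
    set Km : Matrix (Fin d) (Fin d) ℂ := (-(Complex.I*2⁻¹)) • (C - Cᴴ) with hKmdef
    have hstar2 : star ((2:ℂ)⁻¹) = (2:ℂ)⁻¹ := by simp
    have hHmherm : Hmᴴ = Hm := by
      rw [hHmdef, Matrix.conjTranspose_smul, Matrix.conjTranspose_add,
        Matrix.conjTranspose_conjTranspose, hstar2, add_comm Cᴴ C]
    have hKmherm : Kmᴴ = Km := by
      rw [hKmdef, Matrix.conjTranspose_smul, Matrix.conjTranspose_sub,
        Matrix.conjTranspose_conjTranspose]
      have hs : star (-(Complex.I*2⁻¹)) = Complex.I*2⁻¹ := by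
        simp [Complex.star_def]
      rw [hs, show (Complex.I*2⁻¹) • (Cᴴ - C) = (-(Complex.I*2⁻¹)) • (C - Cᴴ) by
        rw [neg_smul, ← smul_neg, neg_sub]]
    have hHmA : A*Hm = Hm*A := by
      rw [hHmdef, Matrix.mul_smul, Matrix.smul_mul, Matrix.mul_add, Matrix.add_mul, hAC, hACt]
    have hHmB : B*Hm = Hm*B := by
      rw [hHmdef, Matrix.mul_smul, Matrix.smul_mul, Matrix.mul_add, Matrix.add_mul, hBC, hBCt]
    have hKmA : A*Km = Km*A := by
      rw [hKmdef, Matrix.mul_smul, Matrix.smul_mul, Matrix.mul_sub, Matrix.sub_mul, hAC, hACt]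
    have hKmB : B*Km = Km*B := by
      rw [hKmdef, Matrix.mul_smul, Matrix.smul_mul, Matrix.mul_sub, Matrix.sub_mul, hBC, hBCt]
    obtain ⟨t, ht⟩ := key Hm hHmherm hHmA hHmB
    obtain ⟨s, hs2⟩ := key Km hKmherm hKmA hKmB
    refine ⟨t + Complex.I * s, ?_⟩
    have hImul : Complex.I * -(Complex.I * 2⁻¹) = 2⁻¹ := by
      have := Complex.I_mul_I
      ring_nf
      rw [Complex.I_sq]
      norm_num
    have hdecomp : C = Hm + Complex.I • Km := by
      rw [hHmdef, hKmdef, smul_smul, hImul, ← smul_add,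
        show (C + Cᴴ) + (C - Cᴴ) = (2:ℂ)•C by rw [two_smul]; abel, smul_smul]
      norm_num
    rw [hdecomp, ht, hs2, smul_smul, ← add_smul]
  · -- trivial commutant → surjectivity
    intro hcomm Y hYherm hYtr
    -- the big expression is Hermitian for skew inputs
    have hThm : ∀ X₁ X₂ : Matrix (Fin d) (Fin d) ℂ, X₁ᴴ = -X₁ → X₂ᴴ = -X₂ →
        ((S*X₁ - X₁*S)*B*S + S*B*(S*X₁ - X₁*S) + S*(B*X₂ - X₂*B)*S)ᴴ
          = (S*X₁ - X₁*S)*B*S + S*B*(S*X₁ - X₁*S) + S*(B*X₂ - X₂*B)*S := by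
      intro X₁ X₂ s1 s2
      simp only [Matrix.conjTranspose_add, Matrix.conjTranspose_mul, Matrix.conjTranspose_sub,
        hSherm, hBherm, s1, s2]
      noncomm_ring
    -- additivity and homogeneity of T
    have hTadd : ∀ X₁ X₂ X₁' X₂' : Matrix (Fin d) (Fin d) ℂ,
        (S*(X₁+X₁') - (X₁+X₁')*S)*B*S + S*B*(S*(X₁+X₁') - (X₁+X₁')*S)
          + S*(B*(X₂+X₂') - (X₂+X₂')*B)*S
        = ((S*X₁ - X₁*S)*B*S + S*B*(S*X₁ - X₁*S) + S*(B*X₂ - X₂*B)*S)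
          + ((S*X₁' - X₁'*S)*B*S + S*B*(S*X₁' - X₁'*S) + S*(B*X₂' - X₂'*B)*S) := by
      intro X₁ X₂ X₁' X₂'; noncomm_ring
    have hTsmul : ∀ (c : ℂ) (X₁ X₂ : Matrix (Fin d) (Fin d) ℂ),
        (S*(c • X₁) - (c • X₁)*S)*B*S + S*B*(S*(c • X₁) - (c • X₁)*S)
          + S*(B*(c • X₂) - (c • X₂)*B)*S
        = c • ((S*X₁ - X₁*S)*B*S + S*B*(S*X₁ - X₁*S) + S*(B*X₂ - X₂*B)*S) := by
      intro c X₁ X₂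
      simp only [Matrix.mul_smul, Matrix.smul_mul, ← smul_sub, ← smul_add]
    -- the range submodule
    set R' : Submodule ℝ ↥(hermSub d) :=
      { carrier := {y | ∃ X₁ X₂ : Matrix (Fin d) (Fin d) ℂ, X₁ᴴ = -X₁ ∧ X₂ᴴ = -X₂ ∧
          (S*X₁ - X₁*S)*B*S + S*B*(S*X₁ - X₁*S) + S*(B*X₂ - X₂*B)*S
            = (y : Matrix (Fin d) (Fin d) ℂ)}
        add_mem' := by
          rintro a b ⟨X₁, X₂, s1, s2, e⟩ ⟨X₁', X₂', s1', s2', e'⟩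
          refine ⟨X₁ + X₁', X₂ + X₂', ?_, ?_, ?_⟩
          · rw [Matrix.conjTranspose_add, s1, s1']; abel
          · rw [Matrix.conjTranspose_add, s2, s2']; abel
          · rw [hTadd, e, e']; rfl
        zero_mem' := by
          refine ⟨0, 0, by simp, by simp, ?_⟩
          show _ = (0 : Matrix (Fin d) (Fin d) ℂ)
          simp
        smul_mem' := by
          rintro r a ⟨X₁, X₂, s1, s2, e⟩
          refine ⟨(r : ℂ) • X₁, (r : ℂ) • X₂, ?_, ?_, ?_⟩
          · rw [Matrix.conjTranspose_smul, s1]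
            simp [Complex.conj_ofReal]
          · rw [Matrix.conjTranspose_smul, s2]
            simp [Complex.conj_ofReal]
          · rw [hTsmul, e]
            show _ = ((r • a : ↥(hermSub d)) : Matrix (Fin d) (Fin d) ℂ)
            rw [Submodule.coe_smul, real_smul_mat] } with hR'def
    -- the tangent space submodule
    set V' : Submodule ℝ ↥(hermSub d) :=
      { carrier := {y | Matrix.trace (W * (y : Matrix (Fin d) (Fin d) ℂ)) = 0}
        add_mem' := by
          intro a b ha hb
          show Matrix.trace (W * ((a : Matrix (Fin d) (Fin d) ℂ) + (b : Matrix (Fin d) (Fin d) ℂ))) = 0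
          rw [Matrix.mul_add, Matrix.trace_add]
          rw [Set.mem_setOf_eq] at ha hb
          rw [ha, hb, add_zero]
        zero_mem' := by
          show Matrix.trace (W * (0 : Matrix (Fin d) (Fin d) ℂ)) = 0
          simp
        smul_mem' := by
          intro r a ha
          show Matrix.trace (W * (r • (a : Matrix (Fin d) (Fin d) ℂ))) = 0
          rw [Set.mem_setOf_eq] at ha
          rw [real_smul_mat, Matrix.mul_smul, Matrix.trace_smul, ha, smul_zero] } with hV'def
    -- duality hypothesis
    have hdual : ∀ Z : ↥(hermSub d),
        (∀ y ∈ R', Matrix.trace ((Z : Matrix (Fin d) (Fin d) ℂ) * (y : Matrix (Fin d) (Fin d) ℂ)) = 0) →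
        ∀ y ∈ V', Matrix.trace ((Z : Matrix (Fin d) (Fin d) ℂ) * (y : Matrix (Fin d) (Fin d) ℂ)) = 0 := by
      intro Z hZR
      set Zc : Matrix (Fin d) (Fin d) ℂ := (Z : Matrix (Fin d) (Fin d) ℂ) with hZcdef
      have hZherm : Zcᴴ = Zc := Z.2
      have hTr0 : ∀ X₁ X₂ : Matrix (Fin d) (Fin d) ℂ, X₁ᴴ = -X₁ → X₂ᴴ = -X₂ →
          Matrix.trace (Zc * ((S*X₁ - X₁*S)*B*S + S*B*(S*X₁ - X₁*S) + S*(B*X₂ - X₂*B)*S)) = 0 := by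
        intro X₁ X₂ s1 s2
        exact hZR ⟨_, hThm X₁ X₂ s1 s2⟩ ⟨X₁, X₂, s1, s2, rfl⟩
      -- the two adjoint-kernel matrices
      set N : Matrix (Fin d) (Fin d) ℂ := B*S*Zc + Zc*S*B with hNdef
      set K₁ : Matrix (Fin d) (Fin d) ℂ := N*S - S*N with hK1def
      set K₂ : Matrix (Fin d) (Fin d) ℂ := S*Zc*S*B - B*S*Zc*S with hK2def
      have hsum : ∀ X₁ X₂ : Matrix (Fin d) (Fin d) ℂ, X₁ᴴ = -X₁ → X₂ᴴ = -X₂ →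
          Matrix.trace (K₁ * X₁) + Matrix.trace (K₂ * X₂) = 0 := by
        intro X₁ X₂ s1 s2
        rw [← trace_T_eq, hTr0 X₁ X₂ s1 s2]
      have hNherm : Nᴴ = N := by
        rw [hNdef, Matrix.conjTranspose_add, Matrix.conjTranspose_mul, Matrix.conjTranspose_mul,
          Matrix.conjTranspose_mul, Matrix.conjTranspose_mul, hSherm, hBherm, hZherm]
        noncomm_ring
      have hK1skew : K₁ᴴ = -K₁ := by
        rw [hK1def, Matrix.conjTranspose_sub, Matrix.conjTranspose_mul, Matrix.conjTranspose_mul,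
          hSherm, hNherm]
        noncomm_ring
      have hK2skew : K₂ᴴ = -K₂ := by
        rw [hK2def]
        simp only [Matrix.conjTranspose_sub, Matrix.conjTranspose_mul, hSherm, hBherm, hZherm]
        noncomm_ring
      have hK1z : K₁ = 0 := by
        apply skew_elim hK1skew
        intro X hX
        have := hsum X 0 hX (by simp)
        simpa using this
      have hK2z : K₂ = 0 := by
        apply skew_elim hK2skew
        intro X hX
        have := hsum 0 X (by simp) hX
        simpa using this
      -- M := S*Zc*S commutes with B
      have hMB : S*Zc*S*B = B*(S*Zc*S) := by
        have := sub_eq_zero.mp hK2z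
        rw [this]; noncomm_ring
      have hZc : Zc = Rm*(S*Zc*S)*Rm := by
        rw [show Rm*(S*Zc*S)*Rm = (Rm*S)*Zc*(S*Rm) by noncomm_ring, hRS, hSR,
          Matrix.one_mul, Matrix.mul_one]
      set P : Matrix (Fin d) (Fin d) ℂ := B*(S*Zc*S) with hPdef
      have hPB : B*P = P*B := by
        rw [hPdef, show B*(S*Zc*S)*B = B*(S*Zc*S*B) by noncomm_ring, hMB]
      have hNP : N = P*Rm + Rm*P := by
        have e1 : B*S*Zc = P*Rm := by
          conv_lhs => rw [hZc]
          rw [hPdef]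
          rw [show B*S*(Rm*(S*Zc*S)*Rm) = B*(S*Rm)*(S*Zc*S)*Rm by noncomm_ring, hSR]
          noncomm_ring
        have e2 : Zc*S*B = Rm*P := by
          conv_lhs => rw [hZc]
          rw [hPdef]
          rw [show Rm*(S*Zc*S)*Rm*S*B = Rm*((S*Zc*S)*((Rm*S)*B)) by noncomm_ring, hRS]
          rw [show Rm*(S*Zc*S*(1*B)) = Rm*(S*Zc*S*B) by noncomm_ring, hMB]
        rw [hNdef, e1, e2]
      have hcross : Rm*P*S = S*P*Rm := by
        have h0 : N*S = S*N := sub_eq_zero.mp hK1z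
        rw [hNP] at h0
        have h1 : P + Rm*P*S = S*P*Rm + P := by
          calc P + Rm*P*S = (P*Rm + Rm*P)*S := by
                rw [show (P*Rm + Rm*P)*S = P*(Rm*S) + Rm*P*S by noncomm_ring, hRS,
                  Matrix.mul_one]
            _ = S*(P*Rm + Rm*P) := h0
            _ = S*P*Rm + P := by
                rw [show S*(P*Rm + Rm*P) = S*P*Rm + (S*Rm)*P by noncomm_ring, hSR,
                  Matrix.one_mul]
        have := add_left_cancel (a := P) (by rw [h1]; abel : P + Rm*P*S = P + S*P*Rm)
        exact this
      have hPA : A*P = P*A := by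
        calc A*P = Rm*(Rm*P*S)*Rm := by
              rw [show Rm*(Rm*P*S)*Rm = Rm*Rm*P*(S*Rm) by noncomm_ring, hSR, Matrix.mul_one, hRR]
          _ = Rm*(S*P*Rm)*Rm := by rw [hcross]
          _ = P*A := by
              rw [show Rm*(S*P*Rm)*Rm = (Rm*S)*(P*(Rm*Rm)) by noncomm_ring, hRS, hRR,
                Matrix.one_mul]
      obtain ⟨c, hc⟩ := hcomm P hPA hPB
      have hMc : S*Zc*S = c • B⁻¹ := by
        have : B⁻¹ * (B*(S*Zc*S)) = B⁻¹ * (c • (1 : Matrix (Fin d) (Fin d) ℂ)) := by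
          rw [← hPdef, hc]
        rw [show B⁻¹*(B*(S*Zc*S)) = (B⁻¹*B)*(S*Zc*S) by noncomm_ring, hBiB, Matrix.one_mul] at this
        rw [this, Matrix.mul_smul, Matrix.mul_one]
      have hZW : Zc = c • W := by
        rw [hZc, hMc, hWdef]
        rw [Matrix.mul_smul, Matrix.smul_mul]
      intro y hy
      have hy0 : Matrix.trace (W * (y : Matrix (Fin d) (Fin d) ℂ)) = 0 := hy
      show Matrix.trace (Zc * (y : Matrix (Fin d) (Fin d) ℂ)) = 0
      rw [hZW, Matrix.smul_mul, Matrix.trace_smul, hy0, smul_zero]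
    have hVR := duality hdual
    have hyV : (⟨Y, hYherm⟩ : ↥(hermSub d)) ∈ V' := by
      show Matrix.trace (W * Y) = 0
      exact hYtr
    obtain ⟨X₁, X₂, s1, s2, e⟩ := hVR hyV
    exact ⟨X₁, X₂, s1, s2, e⟩
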